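/- Let R be a commutative ring, D : R → R a derivation, W ∈ R, and Q an m×m matrix over R with Q² = W · Id_m. If D(W) is a unit of R, then there exists an m×m matrix M over R with Q·M + M·Q = Id_m (namely M = D(W)⁻¹ · D(Q)); in other words, the identity endomorphism of the ungraded matrix factorization (R^m, Q) is exact, so its cohomology vanishes. -/

import Mathlib

/-- For a commutative ring `R`, a derivation `D : R → R`, `W ∈ R`, and
an `m×m` matrix `Q` with `Q² = W·Id`: if `D(W)` is a unit, then there is a matrix `M`
(namely `M = D(W)⁻¹ · D(Q)`) with `Q·M + M·Q = Id`, i.e. the identity endomorphism of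
the ungraded matrix factorization `(Rᵐ, Q)` is exact, so its cohomology vanishes. -/
theorem derivation_unit_identity_exact {R : Type*} [CommRing R]
    (D : R → R)
    (hadd : ∀ a b : R, D (a + b) = D a + D b)
    (hLeibniz : ∀ a b : R, D (a * b) = a * D b + D a * b)
    {m : ℕ} (W : R) (Q : Matrix (Fin m) (Fin m) R)
    (hQ : Q * Q = W • (1 : Matrix (Fin m) (Fin m) R))
    (hW : IsUnit (D W)) :
    ∃ M : Matrix (Fin m) (Fin m) R,
      M = ((hW.unit⁻¹ : Rˣ) : R) • Q.map D ∧
      Q * M + M * Q = (1 : Matrix (Fin m) (Fin m) R) := by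
  have hD0 : D 0 = 0 := by
    have h := hadd 0 0
    rw [add_zero] at h
    exact right_eq_add.mp h
  have hD1 : D 1 = 0 := by
    have h := hLeibniz 1 1
    rw [mul_one, one_mul, mul_one] at h
    exact right_eq_add.mp h
  have hsum : ∀ (s : Finset (Fin m)) (f : Fin m → R),
      D (∑ i ∈ s, f i) = ∑ i ∈ s, D (f i) := by
    intro s f
    induction s using Finset.cons_induction with
    | empty => simpa using hD0
    | cons a s ha ih => rw [Finset.sum_cons, Finset.sum_cons, hadd, ih]
  -- key identity: D applied entrywise to Q*Q
  have hkey : Q * Q.map D + Q.map D * Q = D W • (1 : Matrix (Fin m) (Fin m) R) := by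
    have h1 : (Q * Q).map D = Q * Q.map D + Q.map D * Q := by
      ext i j
      simp only [Matrix.map_apply, Matrix.mul_apply, Matrix.add_apply, hsum,
        ← Finset.sum_add_distrib]
      exact Finset.sum_congr rfl fun k _ => hLeibniz _ _
    have h2 : (W • (1 : Matrix (Fin m) (Fin m) R)).map D
        = D W • (1 : Matrix (Fin m) (Fin m) R) := by
      ext i j
      by_cases h : i = j
      · subst h
        simp [Matrix.map_apply, Matrix.one_apply, hD1, hLeibniz W 1]
      · simp [Matrix.map_apply, Matrix.one_apply, h, hD0]
    rw [← h1, hQ, h2]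
  refine ⟨((hW.unit⁻¹ : Rˣ) : R) • Q.map D, rfl, ?_⟩
  rw [Matrix.mul_smul, Matrix.smul_mul, ← smul_add, hkey, smul_smul,
    IsUnit.val_inv_mul, one_smul]
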